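/- If a binary word f is tilde-non-isometric, then either f has a 1-tilde-error overlap of type swap (i.e., some prefix and suffix of equal length l are at swap-mismatch distance 1 realized by a single swap), or f has a 2-tilde-error overlap (some prefix and suffix of equal length are at swap-mismatch distance exactly 2). -/

import Mathlib

/-- Edit operations on binary words: `R i` flips the bit at position `i`,
`S i` swaps the (distinct) bits at positions `i` and `i+1`. Positions are 0-based. -/
inductive TOp where
  | R (i : ℕ)
  | S (i : ℕ)
deriving DecidableEq

namespace TOp

def apply : TOp → List Bool → List Bool
  | R i, w => w.set i (!(w.getD i false))
  | S i, w => (w.set i (w.getD (i+1) false)).set (i+1) (w.getD i false)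

def valid : TOp → List Bool → Prop
  | R i, w => i < w.length
  | S i, w => i + 1 < w.length ∧ w.getD i false ≠ w.getD (i+1) false

/-- The set of positions modified by an operation. -/
def positions : TOp → Finset ℕ
  | R i => {i}
  | S i => {i, i+1}

/-- The (leftmost) position of an operation. -/
def pos : TOp → ℕ
  | R i => i
  | S i => i

def isR : TOp → Prop
  | R _ => True
  | S _ => False

def isS : TOp → Prop
  | R _ => False
  | S _ => True

end TOp

/-- All operations of a sequence are valid when applied successively starting from `w`. -/
def validSeq : List TOp → List Bool → Prop
  | [], _ => True
  | o :: os, w => o.valid w ∧ validSeq os (o.apply w)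

def applySeq : List TOp → List Bool → List Bool
  | [], w => w
  | o :: os, w => applySeq os (o.apply w)

/-- `ops` is a tilde-transformation from `u` to `v`. -/
def Transforms (ops : List TOp) (u v : List Bool) : Prop :=
  validSeq ops u ∧ applySeq ops u = v

/-- The swap-mismatch (tilde) distance between two words. -/
noncomputable def tdist (u v : List Bool) : ℕ :=
  sInf { n | ∃ ops : List TOp, ops.length = n ∧ Transforms ops u v }

/-- Each position of the word is modified at most once along the sequence. -/
def eachPosOnce (ops : List TOp) : Prop :=
  ops.Pairwise fun o o' => Disjoint o.positions o'.positions

/-- A minimal tilde-transformation: length `tdist u v`, each position changed at most once. -/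
def MinimalTransf (ops : List TOp) (u v : List Bool) : Prop :=
  Transforms ops u v ∧ ops.length = tdist u v ∧ eachPosOnce ops

/-- The list of all words `w_0 = u, w_1, …, w_h` visited by the transformation. -/
def trajectory (ops : List TOp) (u : List Bool) : List (List Bool) :=
  List.scanl (fun w o => o.apply w) u ops

/-- `w` avoids `f` as a factor. -/
def FFree (f w : List Bool) : Prop := ¬ f <:+: w

/-- All words along the transformation are `f`-free. -/
def FreeTransf (f : List Bool) (ops : List TOp) (u : List Bool) : Prop :=
  ∀ w ∈ trajectory ops u, FFree f w

/-- `f` is tilde-isometric. -/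
def TildeIsometric (f : List Bool) : Prop :=
  ∀ u v : List Bool, u.length = v.length → f.length < u.length →
    FFree f u → FFree f v →
      ∃ ops : List TOp, MinimalTransf ops u v ∧ FreeTransf f ops u

/-- `(u,v)` is a pair of tilde-witnesses for `f`. -/
def Witnesses (f u v : List Bool) : Prop :=
  u.length = v.length ∧ FFree f u ∧ FFree f v ∧ 2 ≤ tdist u v ∧
    ∀ ops : List TOp, MinimalTransf ops u v → ¬ FreeTransf f ops u

/-- Hamming distance between equal-length words (number of mismatch positions). -/
def hdist (u v : List Bool) : ℕ := ((u.zip v).filter fun p => p.1 != p.2).length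

/-! ### Part I : basic lemmas about bits and operations -/

/-- The bit of `w` at position `p` (false if out of range). -/
def bit (w : List Bool) (p : ℕ) : Bool := w.getD p false

namespace TOp

def lo : TOp → ℕ
  | R i => i
  | S i => i

def hi : TOp → ℕ
  | R i => i
  | S i => i + 1

lemma lo_le_hi (o : TOp) : o.lo ≤ o.hi := by cases o <;> simp [lo, hi]

lemma hi_le_lo_add_one (o : TOp) : o.hi ≤ o.lo + 1 := by cases o <;> simp [lo, hi]

lemma mem_positions {o : TOp} {p : ℕ} : p ∈ o.positions ↔ o.lo ≤ p ∧ p ≤ o.hi := by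
  cases o <;> simp [positions, lo, hi] <;> omega

end TOp

lemma bit_set (w : List Bool) (i : ℕ) (x : Bool) (p : ℕ) :
    bit (w.set i x) p = if i = p ∧ p < w.length then x else bit w p := by
  simp only [bit, List.getD_eq_getElem?_getD, List.getElem?_set]
  by_cases h : i = p
  · subst h
    by_cases h2 : i < w.length <;> simp [h2, List.getElem?_eq_none, Nat.le_of_not_lt]
  · simp [h, fun hc : i = p ∧ p < w.length => h hc.1]

lemma length_apply (o : TOp) (w : List Bool) : (o.apply w).length = w.length := by
  cases o <;> simp [TOp.apply]

lemma bit_ge_length {w : List Bool} {p : ℕ} (h : w.length ≤ p) : bit w p = false := by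
  simp [bit, List.getD_eq_getElem?_getD, List.getElem?_eq_none h]

lemma ext_bit {w w' : List Bool} (hl : w.length = w'.length)
    (h : ∀ p, bit w p = bit w' p) : w = w' := by
  apply List.ext_getElem hl
  intro n h1 h2
  have := h n
  simp only [bit, List.getD_eq_getElem?_getD, List.getElem?_eq_getElem h1,
    List.getElem?_eq_getElem h2] at this
  simpa using this

lemma bit_eq_getElem {w : List Bool} {p : ℕ} (h : p < w.length) : bit w p = w[p] := by
  simp [bit, List.getD_eq_getElem?_getD, List.getElem?_eq_getElem h]

lemma bit_apply_of_not_mem {o : TOp} {p : ℕ} (h : p ∉ o.positions) (w : List Bool) :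
    bit (o.apply w) p = bit w p := by
  cases o with
  | R i =>
    simp only [TOp.positions, Finset.mem_singleton] at h
    have : ¬ (i = p ∧ p < w.length) := fun hc => h hc.1.symm
    simp [TOp.apply, bit_set, this]
  | S i =>
    simp only [TOp.positions, Finset.mem_insert, Finset.mem_singleton, not_or] at h
    show bit (((w.set i (w.getD (i+1) false)).set (i+1) (w.getD i false))) p = bit w p
    rw [bit_set, if_neg (fun hc => h.2 hc.1.symm), bit_set,
      if_neg (fun hc => h.1 hc.1.symm)]

lemma hi_lt_length {o : TOp} {w : List Bool} (h : o.valid w) : o.hi < w.length := by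
  cases o with
  | R i => exact h
  | S i => exact h.1

lemma bit_apply_of_mem {o : TOp} {w : List Bool} (hv : o.valid w) {p : ℕ}
    (h : p ∈ o.positions) : bit (o.apply w) p = !(bit w p) := by
  cases o with
  | R i =>
    simp only [TOp.positions, Finset.mem_singleton] at h
    subst h
    have h1 : p < w.length := hv
    simp [TOp.apply, bit_set, h1, bit]
  | S i =>
    obtain ⟨hlen, hne⟩ := hv
    simp only [TOp.positions, Finset.mem_insert, Finset.mem_singleton] at h
    have h2 : i + 1 < w.length := hlen
    have h1 : i < w.length := by omega
    have hb : bit w i = !(bit w (i+1)) := by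
      simp only [bit] at hne ⊢
      cases hbi : w.getD i false <;> cases hbj : w.getD (i+1) false <;> simp_all
    show bit (((w.set i (w.getD (i+1) false)).set (i+1) (w.getD i false))) p = !(bit w p)
    rcases h with h | h
    · subst h
      rw [bit_set, if_neg (by omega), bit_set,
        if_pos ⟨rfl, h1⟩]
      show bit w (p+1) = !(bit w p)
      rw [hb]; simp
    · subst h
      rw [bit_set, if_pos ⟨rfl, by simpa using h2⟩]
      show bit w i = !(bit w (i+1))
      exact hb

/-- Validity only depends on the length and the bits at the op's positions. -/
lemma valid_congr {o : TOp} {w w' : List Bool} (hl : w.length = w'.length)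
    (hb : ∀ p ∈ o.positions, bit w p = bit w' p) (h : o.valid w) : o.valid w' := by
  cases o with
  | R i =>
    simp only [TOp.valid] at h ⊢
    omega
  | S i =>
    simp only [TOp.valid] at h ⊢
    refine ⟨by omega, ?_⟩
    have h1 := hb i (by simp [TOp.positions])
    have h2 := hb (i+1) (by simp [TOp.positions])
    simp only [bit] at h1 h2
    rw [← h1, ← h2]
    exact h.2

lemma valid_iff_bits {o : TOp} {w w' : List Bool} (hl : w.length = w'.length)
    (hb : ∀ p ∈ o.positions, bit w p = bit w' p) : o.valid w ↔ o.valid w' :=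
  ⟨valid_congr hl hb, valid_congr hl.symm (fun p hp => (hb p hp).symm)⟩

/-- The full description of the result of a valid operation. -/
lemma bit_apply {o : TOp} {w : List Bool} (hv : o.valid w) (p : ℕ) :
    bit (o.apply w) p = if p ∈ o.positions then !(bit w p) else bit w p := by
  by_cases h : p ∈ o.positions
  · simp [h, bit_apply_of_mem hv]
  · simp [h, bit_apply_of_not_mem h]


/-! ### Part II : sequences -/

lemma length_applySeq (ops : List TOp) (u : List Bool) :
    (applySeq ops u).length = u.length := by
  induction ops generalizing u with
  | nil => rfl
  | cons o os ih => simp [applySeq, ih, length_apply]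

lemma applySeq_append (A B : List TOp) (u : List Bool) :
    applySeq (A ++ B) u = applySeq B (applySeq A u) := by
  induction A generalizing u with
  | nil => rfl
  | cons o os ih => simp [applySeq, ih]

lemma validSeq_append {A B : List TOp} {u : List Bool} :
    validSeq (A ++ B) u ↔ validSeq A u ∧ validSeq B (applySeq A u) := by
  induction A generalizing u with
  | nil => simp [validSeq, applySeq]
  | cons o os ih => simp [validSeq, applySeq, ih, and_assoc]

lemma trajectory_cons (o : TOp) (ops : List TOp) (u : List Bool) :
    trajectory (o :: ops) u = u :: trajectory ops (o.apply u) := by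
  simp [trajectory, List.scanl]

lemma self_mem_trajectory (ops : List TOp) (u : List Bool) : u ∈ trajectory ops u := by
  cases ops <;> simp [trajectory, List.scanl]

lemma mem_trajectory_iff {ops : List TOp} {u w : List Bool} :
    w ∈ trajectory ops u ↔ ∃ k ≤ ops.length, w = applySeq (ops.take k) u := by
  induction ops generalizing u with
  | nil =>
    simp only [trajectory, List.scanl_nil, List.mem_cons, List.not_mem_nil, or_false,
      List.length_nil, Nat.le_zero, List.take_nil]
    constructor
    · rintro rfl; exact ⟨0, rfl, rfl⟩
    · rintro ⟨k, _, rfl⟩; rfl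
  | cons o os ih =>
    rw [trajectory_cons]
    simp only [List.mem_cons, ih]
    constructor
    · rintro (rfl | ⟨k, hk, rfl⟩)
      · exact ⟨0, by simp, by simp [applySeq]⟩
      · exact ⟨k + 1, by simpa using hk, by simp [applySeq]⟩
    · rintro ⟨k, hk, rfl⟩
      cases k with
      | zero => left; simp [applySeq]
      | succ k => right; exact ⟨k, by simpa using hk, by simp [applySeq]⟩

lemma applySeq_mem_trajectory (ops : List TOp) (u : List Bool) :
    applySeq ops u ∈ trajectory ops u := by
  rw [mem_trajectory_iff]
  exact ⟨ops.length, le_rfl, by simp⟩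

/-! ### Part III : eachPosOnce facts and commutation -/

lemma eachPosOnce_cons {o : TOp} {ops : List TOp} :
    eachPosOnce (o :: ops) ↔
      (∀ o' ∈ ops, Disjoint o.positions o'.positions) ∧ eachPosOnce ops := by
  simp [eachPosOnce]

lemma positions_nonempty (o : TOp) : o.positions.Nonempty := by
  cases o <;> simp [TOp.positions]

lemma bit_applySeq_of_not_touched {ops : List TOp} {p : ℕ}
    (h : ∀ o ∈ ops, p ∉ o.positions) (u : List Bool) :
    bit (applySeq ops u) p = bit u p := by
  induction ops generalizing u with
  | nil => rfl
  | cons o os ih =>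
    simp only [applySeq]
    rw [ih (fun o' ho' => h o' (by simp [ho']))]
    exact bit_apply_of_not_mem (h o (by simp)) u

/-- In an eachPosOnce valid sequence, a position touched by a member gets negated. -/
lemma bit_applySeq_of_touched {ops : List TOp} {u : List Bool} {o : TOp} {p : ℕ}
    (h1 : eachPosOnce ops) (h2 : validSeq ops u) (ho : o ∈ ops) (hp : p ∈ o.positions) :
    bit (applySeq ops u) p = !(bit u p) := by
  induction ops generalizing u with
  | nil => simp at ho
  | cons a os ih =>
    rw [eachPosOnce_cons] at h1
    obtain ⟨hval, hvs⟩ := h2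
    rcases List.mem_cons.1 ho with rfl | ho'
    · simp only [applySeq]
      rw [bit_applySeq_of_not_touched
        (fun o' ho' => Finset.disjoint_left.1 (h1.1 o' ho') hp)]
      exact bit_apply_of_mem hval hp
    · simp only [applySeq]
      rw [ih h1.2 hvs ho']
      congr 1
      exact bit_apply_of_not_mem
        (fun hmem => Finset.disjoint_left.1 (h1.1 o ho') hmem hp) u

/-- Mismatch characterization for eachPosOnce transformations. -/
lemma mismatch_iff_touched {ops : List TOp} {u v : List Bool}
    (ht : Transforms ops u v) (h1 : eachPosOnce ops) (p : ℕ) :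
    bit u p ≠ bit v p ↔ ∃ o ∈ ops, p ∈ o.positions := by
  obtain ⟨hv, happ⟩ := ht
  subst happ
  constructor
  · intro hne
    by_contra hc
    push_neg at hc
    exact hne (bit_applySeq_of_not_touched hc u).symm
  · rintro ⟨o, ho, hp⟩
    rw [bit_applySeq_of_touched h1 hv ho hp]
    simp

/-- Two valid operations with disjoint positions commute. -/
lemma comm_valid {o o' : TOp} {w : List Bool} (hd : Disjoint o.positions o'.positions)
    (h1 : o'.valid w) (h2 : o.valid (o'.apply w)) :
    o.valid w ∧ o'.valid (o.apply w) ∧ o.apply (o'.apply w) = o'.apply (o.apply w) := by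
  have hvo : o.valid w := by
    refine valid_congr (length_apply o' w) (fun p hp => ?_) h2
    exact bit_apply_of_not_mem (fun hm => Finset.disjoint_left.1 hd hp hm) w
  have hvo' : o'.valid (o.apply w) := by
    refine valid_congr (length_apply o w).symm (fun p hp => ?_) h1
    exact (bit_apply_of_not_mem (fun hm => Finset.disjoint_left.1 hd.symm hp hm) w).symm
  refine ⟨hvo, hvo', ?_⟩
  refine ext_bit (by rw [length_apply, length_apply, length_apply, length_apply]) (fun p => ?_)
  rw [bit_apply h2, bit_apply hvo']
  by_cases hpo : p ∈ o.positions
  · have hpo' : p ∉ o'.positions := fun hm => Finset.disjoint_left.1 hd hpo hm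
    rw [if_pos hpo, bit_apply_of_not_mem hpo' w, if_neg hpo', bit_apply_of_mem hvo hpo]
  · rw [if_neg hpo, bit_apply h1, bit_apply hvo]
    by_cases hpo' : p ∈ o'.positions
    · rw [if_pos hpo', if_pos hpo', if_neg hpo]
    · rw [if_neg hpo', if_neg hpo', if_neg hpo]

/-- Pulling a member of an eachPosOnce valid sequence to the front. -/
lemma front_of_mem {ops : List TOp} {u : List Bool} {o : TOp}
    (h1 : eachPosOnce ops) (h2 : validSeq ops u) (ho : o ∈ ops) :
    o.valid u ∧ validSeq (ops.erase o) (o.apply u) ∧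
      applySeq (ops.erase o) (o.apply u) = applySeq ops u := by
  induction ops generalizing u with
  | nil => simp at ho
  | cons a os ih =>
    rw [eachPosOnce_cons] at h1
    obtain ⟨hval, hvs⟩ := h2
    by_cases hao : a = o
    · subst hao
      rw [List.erase_cons_head]
      exact ⟨hval, hvs, rfl⟩
    · have ho' : o ∈ os := by
        rcases List.mem_cons.1 ho with h | h
        · exact absurd h.symm hao
        · exact h
      obtain ⟨hvo, hvrest, happ⟩ := ih h1.2 hvs ho'
      have hdis : Disjoint a.positions o.positions := h1.1 o ho'
      obtain ⟨hvo_u, hva_ou, hcomm⟩ := comm_valid hdis.symm hval hvo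
      rw [List.erase_cons_tail (by simpa using hao)]
      refine ⟨hvo_u, ⟨hva_ou, ?_⟩, ?_⟩
      · show validSeq (os.erase o) (a.apply (o.apply u))
        rw [← hcomm]
        exact hvrest
      · show applySeq (os.erase o) (a.apply (o.apply u)) = applySeq os (a.apply u)
        rw [← hcomm]
        exact happ

lemma eachPosOnce_erase {ops : List TOp} (h : eachPosOnce ops) (o : TOp) :
    eachPosOnce (ops.erase o) :=
  List.Pairwise.sublist (List.erase_sublist (a := o) (l := ops)) h

/-! ### Part IV : tdist basics -/

lemma validSeq_flips {L : List ℕ} {u : List Bool} (h : ∀ p ∈ L, p < u.length) :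
    validSeq (L.map TOp.R) u := by
  induction L generalizing u with
  | nil => trivial
  | cons a L ih =>
    refine ⟨h a (by simp), ?_⟩
    apply ih
    intro p hp
    rw [length_apply]
    exact h p (by simp [hp])

lemma bit_applySeq_flips {L : List ℕ} {u : List Bool} (hnd : L.Nodup)
    (hlt : ∀ q ∈ L, q < u.length) (p : ℕ) :
    bit (applySeq (L.map TOp.R) u) p = if p ∈ L then !(bit u p) else bit u p := by
  induction L generalizing u with
  | nil => simp [applySeq]
  | cons a L ih =>
    simp only [List.map_cons, applySeq]
    rw [ih hnd.of_cons (fun q hq => by rw [length_apply]; exact hlt q (by simp [hq]))]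
    by_cases hp : p ∈ L
    · have hpa : p ≠ a := fun hc => (List.nodup_cons.1 hnd).1 (hc ▸ hp)
      rw [if_pos hp, if_pos (by simp [hp]),
        bit_apply_of_not_mem (by simp [TOp.positions, Ne.symm, hpa]) u]
    · by_cases hpa : p = a
      · subst hpa
        rw [if_neg hp, if_pos (by simp)]
        have : (TOp.R p).valid u := hlt p (by simp)
        exact bit_apply_of_mem this (by simp [TOp.positions])
      · rw [if_neg hp, if_neg (by simp [hpa, hp]),
          bit_apply_of_not_mem (by simp [TOp.positions, hpa]) u]

lemma transforms_exists {u v : List Bool} (h : u.length = v.length) :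
    ∃ ops : List TOp, Transforms ops u v := by
  classical
  have hmem : ∀ p, p ∈ (List.range u.length).filter (fun p => bit u p != bit v p) ↔
      (p < u.length ∧ bit u p ≠ bit v p) := by
    intro p
    simp [List.mem_filter, List.mem_range]
  refine ⟨((List.range u.length).filter (fun p => bit u p != bit v p)).map TOp.R,
    validSeq_flips (fun p hp => ((hmem p).1 hp).1), ?_⟩
  apply ext_bit (by rw [length_applySeq]; exact h)
  intro p
  rw [bit_applySeq_flips (List.Nodup.filter _ List.nodup_range)
    (fun q hq => ((hmem q).1 hq).1) p]
  by_cases hp : p < u.length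
  · by_cases hm : bit u p = bit v p
    · rw [if_neg (fun hc => ((hmem p).1 hc).2 hm), hm]
    · rw [if_pos ((hmem p).2 ⟨hp, hm⟩)]
      cases h1 : bit u p <;> cases h2 : bit v p <;> simp_all
  · rw [if_neg (fun hc => hp ((hmem p).1 hc).1), bit_ge_length (by omega),
      bit_ge_length (by omega)]

lemma tdist_le {ops : List TOp} {u v : List Bool} (h : Transforms ops u v) :
    tdist u v ≤ ops.length :=
  Nat.sInf_le ⟨ops, rfl, h⟩

lemma tdist_spec {u v : List Bool} (h : u.length = v.length) :
    ∃ ops : List TOp, ops.length = tdist u v ∧ Transforms ops u v := by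
  have hne : { n | ∃ ops : List TOp, ops.length = n ∧ Transforms ops u v }.Nonempty := by
    obtain ⟨ops, hops⟩ := transforms_exists h
    exact ⟨ops.length, ops, rfl, hops⟩
  exact Nat.sInf_mem hne

lemma length_eq_of_transforms {ops : List TOp} {u v : List Bool} (h : Transforms ops u v) :
    u.length = v.length := by
  rw [← h.2, length_applySeq]

lemma tdist_self (u : List Bool) : tdist u u = 0 := by
  have : tdist u u ≤ ([] : List TOp).length := tdist_le ⟨trivial, rfl⟩
  simpa using this

lemma eq_of_tdist_zero {u v : List Bool} (hlen : u.length = v.length)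
    (h : tdist u v = 0) : u = v := by
  obtain ⟨ops, hl, ht⟩ := tdist_spec hlen
  rw [h, List.length_eq_zero_iff] at hl
  subst hl
  exact ht.2

lemma tdist_le_succ_of_valid {o : TOp} {u v : List Bool} (hv : o.valid u)
    (hlen : u.length = v.length) :
    tdist u v ≤ tdist (o.apply u) v + 1 := by
  obtain ⟨ops, hl, ht⟩ := tdist_spec (u := o.apply u) (v := v)
    (by rw [length_apply]; exact hlen)
  have h2 : Transforms (o :: ops) u v := ⟨⟨hv, ht.1⟩, ht.2⟩
  have h3 := tdist_le h2
  simp only [List.length_cons, hl] at h3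
  omega

/-! ### Part V : normalization -/

def posUnion (L : List TOp) : Finset ℕ := L.foldr (fun o s => o.positions ∪ s) ∅

@[simp] lemma posUnion_nil : posUnion [] = ∅ := rfl

@[simp] lemma posUnion_cons (o : TOp) (L : List TOp) :
    posUnion (o :: L) = o.positions ∪ posUnion L := rfl

lemma mem_posUnion {L : List TOp} {p : ℕ} :
    p ∈ posUnion L ↔ ∃ o ∈ L, p ∈ o.positions := by
  induction L with
  | nil => simp
  | cons o L ih => simp [ih]

lemma strike_RR {p : ℕ} {u : List Bool} (h1 : (TOp.R p).valid u) :
    (TOp.R p).apply ((TOp.R p).apply u) = u := by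
  have h2 : (TOp.R p).valid ((TOp.R p).apply u) := by
    show _ < _
    rw [length_apply]; exact h1
  apply ext_bit (by rw [length_apply, length_apply])
  intro q
  rw [bit_apply h2, bit_apply h1]
  by_cases hq : q ∈ (TOp.R p).positions <;> simp [hq]

lemma strike_SS {i : ℕ} {u : List Bool} (h1 : (TOp.S i).valid u)
    (h2 : (TOp.S i).valid ((TOp.S i).apply u)) :
    (TOp.S i).apply ((TOp.S i).apply u) = u := by
  apply ext_bit (by rw [length_apply, length_apply])
  intro q
  rw [bit_apply h2, bit_apply h1]
  by_cases hq : q ∈ (TOp.S i).positions <;> simp [hq]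

/-- `R p` followed by `S j` (sharing cell `p`) equals flipping the other cell `q`. -/
lemma strike_RS {p j q : ℕ} {u : List Bool} (h1 : (TOp.R p).valid u)
    (h2 : (TOp.S j).valid ((TOp.R p).apply u))
    (hpq : (p = j ∧ q = j + 1) ∨ (p = j + 1 ∧ q = j)) :
    (TOp.S j).apply ((TOp.R p).apply u) = (TOp.R q).apply u := by
  have hq : (TOp.R q).valid u := by
    show _ < _
    have := h2.1
    rw [length_apply] at this
    omega
  apply ext_bit (by rw [length_apply, length_apply, length_apply])
  intro x
  rw [bit_apply h2, bit_apply h1, bit_apply hq]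
  simp only [TOp.positions, Finset.mem_insert, Finset.mem_singleton]
  split_ifs <;> simp_all <;> omega

/-- `S i` followed by `R j` (sharing cell `j`) equals flipping the other cell `q`. -/
lemma strike_SR {i j q : ℕ} {u : List Bool} (h1 : (TOp.S i).valid u)
    (h2 : (TOp.R j).valid ((TOp.S i).apply u))
    (hpq : (j = i ∧ q = i + 1) ∨ (j = i + 1 ∧ q = i)) :
    (TOp.R j).apply ((TOp.S i).apply u) = (TOp.R q).apply u := by
  have hq : (TOp.R q).valid u := by
    show _ < _
    have := hi_lt_length h1
    simp only [TOp.hi] at this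
    omega
  apply ext_bit (by rw [length_apply, length_apply, length_apply])
  intro x
  rw [bit_apply h2, bit_apply h1, bit_apply hq]
  simp only [TOp.positions, Finset.mem_insert, Finset.mem_singleton]
  split_ifs <;> simp_all <;> omega

/-- `S i` followed by an overlapping adjacent `S j` equals two flips, at
`q1 = min i j` and `q2 = max (i+1) (j+1)`. -/
lemma strike_SS_adj {i j q1 q2 : ℕ} {u : List Bool} (h1 : (TOp.S i).valid u)
    (h2 : (TOp.S j).valid ((TOp.S i).apply u))
    (hij : (j = i + 1 ∧ q1 = i ∧ q2 = i + 2) ∨ (i = j + 1 ∧ q1 = j ∧ q2 = j + 2)) :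
    (TOp.S j).apply ((TOp.S i).apply u) = (TOp.R q2).apply ((TOp.R q1).apply u) := by
  have hlen2 := hi_lt_length h2
  rw [length_apply] at hlen2
  have hlen1 := hi_lt_length h1
  simp only [TOp.hi] at hlen1 hlen2
  have hq1 : (TOp.R q1).valid u := by
    show _ < _
    omega
  have hq2 : (TOp.R q2).valid ((TOp.R q1).apply u) := by
    show _ < _
    rw [length_apply]
    omega
  apply ext_bit (by rw [length_apply, length_apply, length_apply, length_apply])
  intro x
  rw [bit_apply h2, bit_apply h1, bit_apply hq2, bit_apply hq1]
  simp only [TOp.positions, Finset.mem_insert, Finset.mem_singleton]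
  split_ifs <;> simp_all <;> omega


/-- Inserting a flip `R p` in front of an eachPosOnce sequence, normalizing. -/
lemma insertR_ex (B : List TOp) : ∀ (u : List Bool) (p : ℕ),
    (TOp.R p).valid u → eachPosOnce B → validSeq B ((TOp.R p).apply u) →
    ∃ C : List TOp, eachPosOnce C ∧ validSeq C u ∧
      applySeq C u = applySeq B ((TOp.R p).apply u) ∧
      C.length ≤ B.length + 1 ∧ posUnion C ⊆ {p} ∪ posUnion B := by
  induction B with
  | nil =>
    intro u p hv _ _
    exact ⟨[TOp.R p], by simp [eachPosOnce], ⟨hv, trivial⟩, rfl, by simp,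
      by simp [posUnion, TOp.positions]⟩
  | cons b B' ih =>
    intro u p hv hepo hvs
    rw [eachPosOnce_cons] at hepo
    obtain ⟨hvb, hvB'⟩ := hvs
    by_cases hmem : p ∈ b.positions
    · -- strike
      cases b with
      | R j =>
        have hj : j = p := by
          simpa [TOp.positions, eq_comm] using hmem
        subst hj
        refine ⟨B', hepo.2, ?_, ?_, by simp; omega, ?_⟩
        · rw [← strike_RR hv]; exact hvB'
        · show applySeq B' u = applySeq B' ((TOp.R j).apply ((TOp.R j).apply u))
          rw [strike_RR hv]
        · intro x hx
          simp only [posUnion_cons, Finset.mem_union, Finset.mem_singleton]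
          right; right; exact hx
      | S j =>
        simp only [TOp.positions, Finset.mem_insert, Finset.mem_singleton] at hmem
        -- q is the other cell
        obtain ⟨q, hq⟩ : ∃ q, (p = j ∧ q = j + 1) ∨ (p = j + 1 ∧ q = j) := by
          rcases hmem with h | h
          · exact ⟨j + 1, Or.inl ⟨h, rfl⟩⟩
          · exact ⟨j, Or.inr ⟨h, rfl⟩⟩
        have hstrike := strike_RS hv hvb hq
        have hvq : (TOp.R q).valid u := by
          show _ < _
          have := hvb.1
          rw [length_apply] at this
          rcases hq with ⟨h1, h2⟩ | ⟨h1, h2⟩ <;> omega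
        obtain ⟨C, hC1, hC2, hC3, hC4, hC5⟩ := ih u q hvq hepo.2 (hstrike ▸ hvB')
        refine ⟨C, hC1, hC2, ?_, by simp; omega, ?_⟩
        · rw [hC3]
          show applySeq B' ((TOp.R q).apply u) = applySeq B' ((TOp.S j).apply ((TOp.R p).apply u))
          rw [hstrike]
        · intro x hx
          have := hC5 hx
          simp only [Finset.mem_union, Finset.mem_singleton] at this ⊢
          simp only [posUnion_cons, Finset.mem_union]
          rcases this with h | h
          · right; left
            simp only [TOp.positions, Finset.mem_insert, Finset.mem_singleton]
            rcases hq with ⟨h1, h2⟩ | ⟨h1, h2⟩ <;> omega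
          · right; right; exact h
    · -- commute past b
      have hdisj : Disjoint (TOp.R p).positions b.positions := by
        simp only [TOp.positions, Finset.disjoint_left, Finset.mem_singleton]
        rintro x rfl
        exact hmem
      obtain ⟨hvb_u, hvp_bu, hcomm⟩ := comm_valid hdisj.symm hv hvb
      obtain ⟨C, hC1, hC2, hC3, hC4, hC5⟩ := ih (b.apply u) p hvp_bu hepo.2
        (by rw [← hcomm]; exact hvB')
      refine ⟨b :: C, ?_, ⟨hvb_u, hC2⟩, ?_, by simpa using hC4, ?_⟩
      · rw [eachPosOnce_cons]
        refine ⟨fun o' ho' => ?_, hC1⟩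
        have : o'.positions ⊆ {p} ∪ posUnion B' := fun x hx => hC5 (mem_posUnion.2 ⟨o', ho', hx⟩)
        rw [Finset.disjoint_left]
        intro x hxb hxo'
        rcases Finset.mem_union.1 (this hxo') with h | h
        · rw [Finset.mem_singleton] at h
          subst h
          exact hmem hxb
        · exact Finset.disjoint_left.1 (hepo.1 _ (mem_posUnion.1 h).choose_spec.1)
            hxb ((mem_posUnion.1 h).choose_spec.2)
      · show applySeq C (b.apply u) = applySeq B' (b.apply ((TOp.R p).apply u))
        rw [hC3, hcomm]
      · intro x hx
        simp only [posUnion_cons, Finset.mem_union, Finset.mem_singleton] at hx ⊢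
        rcases hx with h | h
        · right; left; exact h
        · rcases Finset.mem_union.1 (hC5 h) with h2 | h2
          · left; exact Finset.mem_singleton.1 h2
          · right; right; exact h2


/-- Inserting a swap `S i` in front of an eachPosOnce sequence, normalizing. -/
lemma insertS_ex (B : List TOp) : ∀ (u : List Bool) (i : ℕ),
    (TOp.S i).valid u → eachPosOnce B → validSeq B ((TOp.S i).apply u) →
    ∃ C : List TOp, eachPosOnce C ∧ validSeq C u ∧
      applySeq C u = applySeq B ((TOp.S i).apply u) ∧
      C.length ≤ B.length + 1 ∧ posUnion C ⊆ (TOp.S i).positions ∪ posUnion B := by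
  induction B with
  | nil =>
    intro u i hv _ _
    exact ⟨[TOp.S i], by simp [eachPosOnce], ⟨hv, trivial⟩, rfl, by simp,
      by simp [posUnion]⟩
  | cons b B' ih =>
    intro u i hv hepo hvs
    rw [eachPosOnce_cons] at hepo
    obtain ⟨hvb, hvB'⟩ := hvs
    by_cases hmem : Disjoint (TOp.S i).positions b.positions
    · -- commute past b
      obtain ⟨hvb_u, hvs_bu, hcomm⟩ := comm_valid hmem.symm hv hvb
      obtain ⟨C, hC1, hC2, hC3, hC4, hC5⟩ := ih (b.apply u) i hvs_bu hepo.2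
        (by rw [← hcomm]; exact hvB')
      refine ⟨b :: C, ?_, ⟨hvb_u, hC2⟩, ?_, by simpa using hC4, ?_⟩
      · rw [eachPosOnce_cons]
        refine ⟨fun o' ho' => ?_, hC1⟩
        have hsub : o'.positions ⊆ (TOp.S i).positions ∪ posUnion B' :=
          fun x hx => hC5 (mem_posUnion.2 ⟨o', ho', hx⟩)
        rw [Finset.disjoint_left]
        intro x hxb hxo'
        rcases Finset.mem_union.1 (hsub hxo') with h | h
        · exact Finset.disjoint_left.1 hmem h hxb
        · obtain ⟨o2, ho2, hxo2⟩ := mem_posUnion.1 h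
          exact Finset.disjoint_left.1 (hepo.1 o2 ho2) hxb hxo2
      · show applySeq C (b.apply u) = applySeq B' (b.apply ((TOp.S i).apply u))
        rw [hC3, hcomm]
      · intro x hx
        simp only [posUnion_cons, Finset.mem_union] at hx ⊢
        rcases hx with h | h
        · right; left; exact h
        · rcases Finset.mem_union.1 (hC5 h) with h2 | h2
          · left; exact h2
          · right; right; exact h2
    · -- strike with b
      cases b with
      | R j =>
        have hj : j = i ∨ j = i + 1 := by
          simp only [Finset.disjoint_right, not_forall, not_not] at hmem
          obtain ⟨x, hx1, hx2⟩ := hmem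
          simp only [TOp.positions, Finset.mem_singleton] at hx1
          subst hx1
          simpa [TOp.positions] using hx2
        obtain ⟨q, hq⟩ : ∃ q, (j = i ∧ q = i + 1) ∨ (j = i + 1 ∧ q = i) := by
          rcases hj with h | h
          · exact ⟨i + 1, Or.inl ⟨h, rfl⟩⟩
          · exact ⟨i, Or.inr ⟨h, rfl⟩⟩
        have hstrike := strike_SR hv hvb hq
        have hvq : (TOp.R q).valid u := by
          show _ < _
          have := hi_lt_length hv
          simp only [TOp.hi] at this
          rcases hq with ⟨h1, h2⟩ | ⟨h1, h2⟩ <;> omega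
        obtain ⟨C, hC1, hC2, hC3, hC4, hC5⟩ := insertR_ex B' u q hvq hepo.2
          (hstrike ▸ hvB')
        refine ⟨C, hC1, hC2, ?_, by simp; omega, ?_⟩
        · rw [hC3]
          show applySeq B' ((TOp.R q).apply u) =
            applySeq B' ((TOp.R j).apply ((TOp.S i).apply u))
          rw [hstrike]
        · intro x hx
          rcases Finset.mem_union.1 (hC5 hx) with h | h
          · rw [Finset.mem_singleton] at h
            apply Finset.mem_union_left
            simp only [TOp.positions, Finset.mem_insert, Finset.mem_singleton]
            rcases hq with ⟨h1, h2⟩ | ⟨h1, h2⟩ <;> omega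
          · apply Finset.mem_union_right
            simp only [posUnion_cons, Finset.mem_union]
            right; exact h
      | S j =>
        have hj : j = i ∨ j = i + 1 ∨ i = j + 1 := by
          simp only [Finset.disjoint_right, not_forall, not_not] at hmem
          obtain ⟨x, hx1, hx2⟩ := hmem
          simp only [TOp.positions, Finset.mem_insert, Finset.mem_singleton] at hx1 hx2
          omega
        rcases hj with hj | hj
        · -- identical swap : cancels
          subst hj
          refine ⟨B', hepo.2, ?_, ?_, by simp; omega, ?_⟩
          · rw [← strike_SS hv hvb]; exact hvB'
          · show applySeq B' u = applySeq B' ((TOp.S j).apply ((TOp.S j).apply u))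
            rw [strike_SS hv hvb]
          · intro x hx
            simp only [posUnion_cons, Finset.mem_union]
            right; right; exact hx
        · -- adjacent overlapping swaps : two flips
          obtain ⟨q1, q2, hq⟩ : ∃ q1 q2, (j = i + 1 ∧ q1 = i ∧ q2 = i + 2) ∨
              (i = j + 1 ∧ q1 = j ∧ q2 = j + 2) := by
            rcases hj with h | h
            · exact ⟨i, i + 2, Or.inl ⟨h, rfl, rfl⟩⟩
            · exact ⟨j, j + 2, Or.inr ⟨h, rfl, rfl⟩⟩
          have hstrike := strike_SS_adj hv hvb hq
          have hlen2 := hi_lt_length hvb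
          rw [length_apply] at hlen2
          have hlen1 := hi_lt_length hv
          simp only [TOp.hi] at hlen1 hlen2
          have hvq1 : (TOp.R q1).valid u := by
            show _ < _
            rcases hq with ⟨h1, h2, h3⟩ | ⟨h1, h2, h3⟩ <;> omega
          have hvq2 : (TOp.R q2).valid ((TOp.R q1).apply u) := by
            show _ < _
            rw [length_apply]
            rcases hq with ⟨h1, h2, h3⟩ | ⟨h1, h2, h3⟩ <;> omega
          -- first insert R q2 into B' (relative to word (R q1).apply u)
          obtain ⟨C1, hC11, hC12, hC13, hC14, hC15⟩ := insertR_ex B'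
            ((TOp.R q1).apply u) q2 hvq2 hepo.2 (hstrike ▸ hvB')
          -- then insert R q1 into C1 (relative to word u)
          obtain ⟨C2, hC21, hC22, hC23, hC24, hC25⟩ := insertR_ex C1 u q1 hvq1 hC11 hC12
          refine ⟨C2, hC21, hC22, ?_, by simp only [List.length_cons]; omega, ?_⟩
          · rw [hC23, hC13]
            show applySeq B' ((TOp.R q2).apply ((TOp.R q1).apply u)) =
              applySeq B' ((TOp.S j).apply ((TOp.S i).apply u))
            rw [hstrike]
          · intro x hx
            rcases Finset.mem_union.1 (hC25 hx) with h | h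
            · rw [Finset.mem_singleton] at h
              subst h
              simp only [posUnion_cons, Finset.mem_union]
              rcases hq with ⟨h1, h2, h3⟩ | ⟨h1, h2, h3⟩
              · left
                simp only [TOp.positions, Finset.mem_insert, Finset.mem_singleton]
                omega
              · right; left
                simp only [TOp.positions, Finset.mem_insert, Finset.mem_singleton]
                omega
            · rcases Finset.mem_union.1 (hC15 h) with h2 | h2
              · rw [Finset.mem_singleton] at h2
                simp only [posUnion_cons, Finset.mem_union]
                subst h2
                rcases hq with ⟨h1, h2, h3⟩ | ⟨h1, h2, h3⟩
                · right; left
                  simp only [TOp.positions, Finset.mem_insert, Finset.mem_singleton]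
                  omega
                · left
                  simp only [TOp.positions, Finset.mem_insert, Finset.mem_singleton]
                  omega
              · apply Finset.mem_union_right
                simp only [posUnion_cons, Finset.mem_union]
                right; exact h2

/-- Any valid sequence can be normalized to an eachPosOnce sequence of
at most the same length with the same effect. -/
lemma normalize_ex (ops : List TOp) : ∀ (u : List Bool), validSeq ops u →
    ∃ C : List TOp, eachPosOnce C ∧ validSeq C u ∧
      applySeq C u = applySeq ops u ∧ C.length ≤ ops.length := by
  induction ops with
  | nil => intro u _; exact ⟨[], by simp [eachPosOnce], trivial, rfl, le_rfl⟩
  | cons o rest ih =>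
    intro u hvs
    obtain ⟨hvo, hvrest⟩ := hvs
    obtain ⟨C', hC'1, hC'2, hC'3, hC'4⟩ := ih (o.apply u) hvrest
    cases o with
    | R p =>
      obtain ⟨C, hC1, hC2, hC3, hC4, _⟩ := insertR_ex C' u p hvo hC'1 hC'2
      refine ⟨C, hC1, hC2, ?_, by simp at hC4 ⊢; omega⟩
      rw [hC3, hC'3]
      rfl
    | S i =>
      obtain ⟨C, hC1, hC2, hC3, hC4, _⟩ := insertS_ex C' u i hvo hC'1 hC'2
      refine ⟨C, hC1, hC2, ?_, by simp at hC4 ⊢; omega⟩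
      rw [hC3, hC'3]
      rfl

/-- Existence of minimal eachPosOnce transformations. -/
lemma exists_minimal_transf {u v : List Bool} (h : u.length = v.length) :
    ∃ ops : List TOp, Transforms ops u v ∧ eachPosOnce ops ∧ ops.length = tdist u v := by
  obtain ⟨ops, hlen, ht⟩ := tdist_spec h
  obtain ⟨C, hC1, hC2, hC3, hC4⟩ := normalize_ex ops u ht.1
  have htC : Transforms C u v := ⟨hC2, by rw [hC3, ht.2]⟩
  have h1 : tdist u v ≤ C.length := tdist_le htC
  exact ⟨C, htC, hC1, by omega⟩


/-! ### Part VI : occurrences and windows -/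

lemma bit_take (f : List Bool) (l j : ℕ) :
    bit (f.take l) j = if j < l then bit f j else false := by
  simp only [bit, List.getD_eq_getElem?_getD, List.getElem?_take]
  by_cases h : j < l <;> simp [h]

lemma bit_drop (f : List Bool) (m j : ℕ) : bit (f.drop m) j = bit f (m + j) := by
  simp only [bit, List.getD_eq_getElem?_getD, List.getElem?_drop]

lemma infix_iff_window {f w : List Bool} :
    f <:+: w ↔ ∃ a, a + f.length ≤ w.length ∧ ∀ j < f.length, bit w (a + j) = bit f j := by
  constructor
  · rintro ⟨s, t, rfl⟩
    refine ⟨s.length, by simp only [List.length_append]; omega, fun j hj => ?_⟩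
    simp only [bit, List.getD_eq_getElem?_getD]
    have h1 : s.length + j < (s ++ f).length := by simp only [List.length_append]; omega
    rw [List.getElem?_append, if_pos h1, List.getElem?_append, if_neg (by omega)]
    simp
  · rintro ⟨a, hlen, hbits⟩
    have hf : f = (w.drop a).take f.length := by
      apply ext_bit
      · rw [List.length_take, List.length_drop]
        omega
      · intro p
        rw [bit_take, bit_drop]
        by_cases hp : p < f.length
        · rw [if_pos hp, hbits p hp]
        · rw [if_neg hp, bit_ge_length (by omega)]
    rw [hf]
    exact ((w.drop a).take_prefix f.length).isInfix.trans (w.drop_suffix a).isInfix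


/-! ### Part VII : the escape (overlap extraction) -/

/-- The conclusion of the main theorem. -/
def Concl (f : List Bool) : Prop :=
  (∃ l i, 1 ≤ l ∧ l ≤ f.length - 1 ∧
      (TOp.S i).valid (f.take l) ∧ (TOp.S i).apply (f.take l) = f.drop (f.length - l)) ∨
  (∃ l, 1 ≤ l ∧ l ≤ f.length - 1 ∧ tdist (f.take l) (f.drop (f.length - l)) = 2)

lemma valid_R_iff {i : ℕ} {w : List Bool} : (TOp.R i).valid w ↔ i < w.length :=
  Iff.rfl

lemma valid_S_iff {i : ℕ} {w : List Bool} :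
    (TOp.S i).valid w ↔ i + 1 < w.length ∧ bit w i ≠ bit w (i + 1) :=
  Iff.rfl

lemma apply_eq_of_bits {z : TOp} {w w' : List Bool} (hv : z.valid w)
    (hl : w'.length = w.length)
    (hb : ∀ p, bit w' p = if p ∈ z.positions then !(bit w p) else bit w p) :
    z.apply w = w' := by
  apply ext_bit (by rw [length_apply, hl])
  intro p
  rw [bit_apply hv, hb]

lemma transforms_two {z1 z2 : TOp} {w w' : List Bool} (hv1 : z1.valid w) (hv2 : z2.valid w)
    (hd : Disjoint z1.positions z2.positions) (hl : w'.length = w.length)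
    (hb : ∀ p, bit w' p =
      if p ∈ z1.positions ∨ p ∈ z2.positions then !(bit w p) else bit w p) :
    Transforms [z1, z2] w w' := by
  have hv2' : z2.valid (z1.apply w) := by
    refine valid_congr (length_apply z1 w).symm (fun p hp => ?_) hv2
    exact (bit_apply_of_not_mem (fun hm => Finset.disjoint_left.1 hd hm hp) w).symm
  refine ⟨⟨hv1, hv2', trivial⟩, ?_⟩
  show z2.apply (z1.apply w) = w'
  apply ext_bit (by rw [length_apply, length_apply, hl])
  intro p
  rw [bit_apply hv2', bit_apply hv1, hb]
  by_cases h1 : p ∈ z1.positions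
  · have h2 : p ∉ z2.positions := fun hm => Finset.disjoint_left.1 hd h1 hm
    simp [h1, h2]
  · by_cases h2 : p ∈ z2.positions <;> simp [h1, h2]

lemma mismatch_subset_single {z : TOp} {w w' : List Bool} (hv : z.valid w)
    (happ : z.apply w = w') {p : ℕ} (hne : bit w p ≠ bit w' p) : p ∈ z.positions := by
  by_contra hc
  rw [← happ, bit_apply_of_not_mem hc w] at hne
  exact hne rfl

lemma tdist_eq_two_of {w w' : List Bool} (hlen : w.length = w'.length)
    (hle : tdist w w' ≤ 2) (hne : w ≠ w')
    (hno1 : ∀ z : TOp, z.valid w → z.apply w ≠ w') : tdist w w' = 2 := by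
  rcases Nat.lt_or_ge (tdist w w') 2 with h | h
  · exfalso
    interval_cases h2 : tdist w w'
    · exact hne (eq_of_tdist_zero hlen h2)
    · obtain ⟨ops, hl, ht⟩ := tdist_spec hlen
      rw [h2] at hl
      obtain ⟨z, rfl⟩ := List.length_eq_one_iff.1 hl
      exact hno1 z ht.1.1 ht.2
  · omega

/-- Case : differences form exactly one adjacent pair with distinct bits : type S overlap. -/
lemma case_S (f : List Bool) (l c : ℕ) (h1 : 1 ≤ l) (h2 : l ≤ f.length - 1)
    (hpre : (f.take l).length = l) (hsuf : (f.drop (f.length - l)).length = l)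
    (hc : c + 1 < l)
    (hbits : bit (f.take l) c ≠ bit (f.take l) (c + 1))
    (hb : ∀ j, bit (f.drop (f.length - l)) j =
      if j = c ∨ j = c + 1 then !(bit (f.take l) j) else bit (f.take l) j) :
    Concl f := by
  left
  have hval : (TOp.S c).valid (f.take l) := valid_S_iff.2 ⟨by rw [hpre]; exact hc, hbits⟩
  refine ⟨l, c, h1, h2, hval, ?_⟩
  refine apply_eq_of_bits hval (by rw [hpre, hsuf]) (fun p => ?_)
  rw [hb p]
  simp only [TOp.positions, Finset.mem_insert, Finset.mem_singleton]
  all_goals rfl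

/-- Case : differences are exactly two cells `c1 ≠ c2`, not an `S`-shape. -/
lemma case_RR (f : List Bool) (l c1 c2 : ℕ) (h1 : 1 ≤ l) (h2 : l ≤ f.length - 1)
    (hpre : (f.take l).length = l) (hsuf : (f.drop (f.length - l)).length = l)
    (hc1 : c1 < l) (hc2 : c2 < l) (hcc : c1 ≠ c2)
    (hnoS : ¬ ((c2 = c1 + 1 ∧ bit (f.take l) c1 ≠ bit (f.take l) c2) ∨
               (c1 = c2 + 1 ∧ bit (f.take l) c2 ≠ bit (f.take l) c1)))
    (hb : ∀ j, bit (f.drop (f.length - l)) j =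
      if j = c1 ∨ j = c2 then !(bit (f.take l) j) else bit (f.take l) j) :
    Concl f := by
  right
  refine ⟨l, h1, h2, ?_⟩
  have hdiff : bit (f.take l) c1 ≠ bit (f.drop (f.length - l)) c1 := by
    rw [hb c1, if_pos (Or.inl rfl)]
    cases bit (f.take l) c1 <;> simp
  have hne : f.take l ≠ f.drop (f.length - l) := fun h => hdiff (by rw [h])
  have hup : tdist (f.take l) (f.drop (f.length - l)) ≤ 2 := by
    have ht : Transforms [TOp.R c1, TOp.R c2] (f.take l) (f.drop (f.length - l)) := by
      apply transforms_two (valid_R_iff.2 (by rw [hpre]; exact hc1))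
        (valid_R_iff.2 (by rw [hpre]; exact hc2))
        (by simp [TOp.positions, Finset.disjoint_left, hcc]) (by rw [hpre, hsuf])
      intro p
      rw [hb p]
      simp only [TOp.positions, Finset.mem_singleton]
      all_goals rfl
    simpa using tdist_le ht
  apply tdist_eq_two_of (by rw [hpre, hsuf]) hup hne
  intro z hvz happ
  have hm1 : c1 ∈ z.positions := by
    apply mismatch_subset_single hvz happ
    rw [hb c1, if_pos (Or.inl rfl)]
    cases bit (f.take l) c1 <;> simp
  have hm2 : c2 ∈ z.positions := by
    apply mismatch_subset_single hvz happ
    rw [hb c2, if_pos (Or.inr rfl)]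
    cases bit (f.take l) c2 <;> simp
  rw [TOp.mem_positions] at hm1 hm2
  have hspan := z.hi_le_lo_add_one
  cases z with
  | R i =>
    simp only [TOp.lo, TOp.hi] at hm1 hm2
    omega
  | S i =>
    simp only [TOp.lo, TOp.hi] at hm1 hm2
    obtain ⟨_, hbz⟩ := valid_S_iff.1 hvz
    have hii : (c1 = i ∧ c2 = i + 1) ∨ (c2 = i ∧ c1 = i + 1) := by omega
    apply hnoS
    rcases hii with ⟨e1, e2⟩ | ⟨e1, e2⟩
    · left
      refine ⟨by omega, ?_⟩
      rw [e1, e2]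
      exact hbz
    · right
      refine ⟨by omega, ?_⟩
      rw [e1, e2]
      exact hbz


lemma no_single_of_three {z : TOp} {w w' : List Bool} (hvz : z.valid w)
    (happ : z.apply w = w') {m1 m2 m3 : ℕ}
    (h12 : m1 ≠ m2) (h13 : m1 ≠ m3) (h23 : m2 ≠ m3)
    (hb1 : bit w m1 ≠ bit w' m1) (hb2 : bit w m2 ≠ bit w' m2)
    (hb3 : bit w m3 ≠ bit w' m3) : False := by
  have hm1 := TOp.mem_positions.1 (mismatch_subset_single hvz happ hb1)
  have hm2 := TOp.mem_positions.1 (mismatch_subset_single hvz happ hb2)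
  have hm3 := TOp.mem_positions.1 (mismatch_subset_single hvz happ hb3)
  have := z.hi_le_lo_add_one
  omega

/-- Case : differences consist of an S-shaped pair plus one more cell : tdist = 2. -/
lemma case_SR (f : List Bool) (l c e : ℕ) (h1 : 1 ≤ l) (h2 : l ≤ f.length - 1)
    (hpre : (f.take l).length = l) (hsuf : (f.drop (f.length - l)).length = l)
    (hc : c + 1 < l) (he : e < l) (hce : e ≠ c ∧ e ≠ c + 1)
    (hbits : bit (f.take l) c ≠ bit (f.take l) (c + 1))
    (hb : ∀ j, bit (f.drop (f.length - l)) j =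
      if j = c ∨ j = c + 1 ∨ j = e then !(bit (f.take l) j) else bit (f.take l) j) :
    Concl f := by
  right
  refine ⟨l, h1, h2, ?_⟩
  have hdiff : ∀ m, (m = c ∨ m = c + 1 ∨ m = e) →
      bit (f.take l) m ≠ bit (f.drop (f.length - l)) m := by
    intro m hm
    rw [hb m, if_pos hm]
    cases bit (f.take l) m <;> simp
  have hne : f.take l ≠ f.drop (f.length - l) :=
    fun h => hdiff c (Or.inl rfl) (by rw [h])
  have hup : tdist (f.take l) (f.drop (f.length - l)) ≤ 2 := by
    have ht : Transforms [TOp.S c, TOp.R e] (f.take l) (f.drop (f.length - l)) := by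
      apply transforms_two (valid_S_iff.2 ⟨by rw [hpre]; exact hc, hbits⟩)
        (valid_R_iff.2 (by rw [hpre]; exact he))
        (by simp only [TOp.positions, Finset.disjoint_left, Finset.mem_insert,
              Finset.mem_singleton]; omega) (by rw [hpre, hsuf])
      intro p
      rw [hb p]
      simp only [TOp.positions, Finset.mem_insert, Finset.mem_singleton]
      congr 1
      simp only [eq_iff_iff]
      tauto
    simpa using tdist_le ht
  apply tdist_eq_two_of (by rw [hpre, hsuf]) hup hne
  intro z hvz happ
  exact no_single_of_three hvz happ (by omega : c ≠ c+1) (by omega : c ≠ e)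
    (by omega : c + 1 ≠ e) (hdiff c (by tauto)) (hdiff (c+1) (by tauto))
    (hdiff e (by tauto))

/-- Case : differences consist of two disjoint S-shaped pairs : tdist = 2. -/
lemma case_SS (f : List Bool) (l c e : ℕ) (h1 : 1 ≤ l) (h2 : l ≤ f.length - 1)
    (hpre : (f.take l).length = l) (hsuf : (f.drop (f.length - l)).length = l)
    (hc : c + 1 < l) (he : e + 1 < l)
    (hce : c ≠ e ∧ c ≠ e + 1 ∧ c + 1 ≠ e)
    (hbc : bit (f.take l) c ≠ bit (f.take l) (c + 1))
    (hbe : bit (f.take l) e ≠ bit (f.take l) (e + 1))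
    (hb : ∀ j, bit (f.drop (f.length - l)) j =
      if j = c ∨ j = c + 1 ∨ j = e ∨ j = e + 1 then !(bit (f.take l) j)
      else bit (f.take l) j) :
    Concl f := by
  right
  refine ⟨l, h1, h2, ?_⟩
  have hdiff : ∀ m, (m = c ∨ m = c + 1 ∨ m = e ∨ m = e + 1) →
      bit (f.take l) m ≠ bit (f.drop (f.length - l)) m := by
    intro m hm
    rw [hb m, if_pos hm]
    cases bit (f.take l) m <;> simp
  have hne : f.take l ≠ f.drop (f.length - l) :=
    fun h => hdiff c (Or.inl rfl) (by rw [h])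
  have hup : tdist (f.take l) (f.drop (f.length - l)) ≤ 2 := by
    have ht : Transforms [TOp.S c, TOp.S e] (f.take l) (f.drop (f.length - l)) := by
      apply transforms_two (valid_S_iff.2 ⟨by rw [hpre]; exact hc, hbc⟩)
        (valid_S_iff.2 ⟨by rw [hpre]; exact he, hbe⟩)
        (by simp only [TOp.positions, Finset.disjoint_left, Finset.mem_insert,
              Finset.mem_singleton]; omega) (by rw [hpre, hsuf])
      intro p
      rw [hb p]
      simp only [TOp.positions, Finset.mem_insert, Finset.mem_singleton]
      congr 1
      simp only [eq_iff_iff]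
      tauto
    simpa using tdist_le ht
  apply tdist_eq_two_of (by rw [hpre, hsuf]) hup hne
  intro z hvz happ
  exact no_single_of_three hvz happ (by omega : c ≠ c+1) (by omega : c ≠ e)
    (by omega : c + 1 ≠ e) (hdiff c (by tauto)) (hdiff (c+1) (by tauto))
    (hdiff e (by tauto))


lemma bnot_ne {x y : Bool} (h : x ≠ y) : (!x) ≠ (!y) := by
  cases x <;> cases y <;> simp_all

/-- The escape : two occurrences with two error cells in the overlap give the conclusion. -/
lemma escape (f u : List Bool) (o k : TOp) (hvo : o.valid u) (hvk : k.valid u)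
    (hd : Disjoint o.positions k.positions) (a a' : ℕ) (haa : a < a')
    (hocc_o : ∀ j < f.length, bit (o.apply u) (a + j) = bit f j)
    (hocc_k : ∀ j < f.length, bit (k.apply u) (a' + j) = bit f j)
    (q1 q2 : ℕ) (hq12 : q1 ≠ q2)
    (hq1r : a' ≤ q1 ∧ q1 < a + f.length) (hq2r : a' ≤ q2 ∧ q2 < a + f.length)
    (hq1m : q1 ∈ o.positions ∪ k.positions) (hq2m : q2 ∈ o.positions ∪ k.positions) :
    Concl f := by
  classical
  set n := f.length with hn
  set l := a + n - a' with hldef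
  have hl1 : 1 ≤ l := by omega
  have hl2 : l ≤ n - 1 := by omega
  have hln : l ≤ n := by omega
  have hal : a' + l = a + n := by omega
  have hpre : (f.take l).length = l := by
    rw [List.length_take]; omega
  have hsuf : (f.drop (n - l)).length = l := by
    rw [List.length_drop]; omega
  have hbpre : ∀ j < l, bit (f.take l) j = bit (k.apply u) (a' + j) := by
    intro j hj
    rw [bit_take, if_pos hj, hocc_k j (by omega)]
  have hbsuf : ∀ j < l, bit (f.drop (n - l)) j = bit (o.apply u) (a' + j) := by
    intro j hj
    rw [bit_drop, ← hocc_o (n - l + j) (by omega)]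
    congr 1
    omega
  -- the pointwise description of suf versus pre
  have hb_of : ∀ (P : ℕ → Prop) (_ : DecidablePred P),
      (∀ j, j < l → ((a' + j ∈ o.positions ∨ a' + j ∈ k.positions) ↔ P j)) →
      (∀ j, P j → j < l) →
      ∀ j, bit (f.drop (n - l)) j = if P j then !(bit (f.take l) j) else bit (f.take l) j := by
    intro P instP hiff hPl j
    by_cases hj : j < l
    · rw [hbpre j hj, hbsuf j hj]
      by_cases hP : P j
      · rw [if_pos hP]
        rcases (hiff j hj).2 hP with hmo | hmk
        · have hnk : a' + j ∉ k.positions := fun hm => Finset.disjoint_left.1 hd hmo hm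
          rw [bit_apply_of_mem hvo hmo, bit_apply_of_not_mem hnk u]
        · have hno : a' + j ∉ o.positions := fun hm => Finset.disjoint_left.1 hd hm hmk
          rw [bit_apply_of_mem hvk hmk, bit_apply_of_not_mem hno u]
          simp
      · rw [if_neg hP]
        have hnone : ¬(a' + j ∈ o.positions ∨ a' + j ∈ k.positions) :=
          fun hor => hP ((hiff j hj).1 hor)
        push_neg at hnone
        rw [bit_apply_of_not_mem hnone.1 u, bit_apply_of_not_mem hnone.2 u]
    · rw [if_neg (fun hP => hj (hPl j hP)), bit_ge_length (by omega),
        bit_ge_length (by omega)]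
  -- contribution description of one operation
  have contrib : ∀ z : TOp, z.valid u →
      (∀ p ∈ z.positions, ¬(a' ≤ p ∧ p < a + n)) ∨
      (∃ g, (a' ≤ g ∧ g < a + n) ∧ g ∈ z.positions ∧
        (∀ p ∈ z.positions, (a' ≤ p ∧ p < a + n) → p = g)) ∨
      (∃ g, z = TOp.S g ∧ (a' ≤ g ∧ g < a + n) ∧ (a' ≤ g + 1 ∧ g + 1 < a + n)) := by
    intro z hvz
    cases z with
    | R i =>
      by_cases hin : a' ≤ i ∧ i < a + n
      · right; left
        refine ⟨i, hin, by simp [TOp.positions], ?_⟩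
        intro p hp _
        simpa [TOp.positions] using hp
      · left
        intro p hp
        simp only [TOp.positions, Finset.mem_singleton] at hp
        subst hp
        exact hin
    | S i =>
      by_cases hin1 : a' ≤ i ∧ i < a + n <;> by_cases hin2 : a' ≤ i + 1 ∧ i + 1 < a + n
      · right; right
        exact ⟨i, rfl, hin1, hin2⟩
      · right; left
        refine ⟨i, hin1, by simp [TOp.positions], ?_⟩
        intro p hp hpin
        simp only [TOp.positions, Finset.mem_insert, Finset.mem_singleton] at hp
        rcases hp with rfl | rfl
        · rfl
        · exact absurd hpin hin2
      · right; left
        refine ⟨i + 1, hin2, by simp [TOp.positions], ?_⟩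
        intro p hp hpin
        simp only [TOp.positions, Finset.mem_insert, Finset.mem_singleton] at hp
        rcases hp with rfl | rfl
        · exact absurd hpin hin1
        · rfl
      · left
        intro p hp
        simp only [TOp.positions, Finset.mem_insert, Finset.mem_singleton] at hp
        rcases hp with rfl | rfl
        · exact hin1
        · exact hin2
  have hq1m' := Finset.mem_union.1 hq1m
  have hq2m' := Finset.mem_union.1 hq2m
  rcases contrib o hvo with hco | ⟨g1, hg1r, hg1m, hg1u⟩ | ⟨g1, hoS, hg1r, hg1r'⟩ <;>
    rcases contrib k hvk with hck | ⟨g2, hg2r, hg2m, hg2u⟩ | ⟨g2, hkS, hg2r, hg2r'⟩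
  · -- none, none : contradiction
    rcases hq1m' with h | h
    · exact absurd hq1r (hco q1 h)
    · exact absurd hq1r (hck q1 h)
  · -- none, one : q1 = q2 = g2
    exfalso
    have e1 : q1 = g2 := by
      rcases hq1m' with h | h
      · exact absurd hq1r (hco q1 h)
      · exact hg2u q1 h hq1r
    have e2 : q2 = g2 := by
      rcases hq2m' with h | h
      · exact absurd hq2r (hco q2 h)
      · exact hg2u q2 h hq2r
    exact hq12 (e1.trans e2.symm)
  · -- none, two : single S of k
    subst hkS
    have hc1 : g2 - a' < l := by omega
    have hc2 : g2 - a' + 1 < l := by omega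
    have e1 : a' + (g2 - a') = g2 := by omega
    have e2 : a' + (g2 - a' + 1) = g2 + 1 := by omega
    have hbits : bit (f.take l) (g2 - a') ≠ bit (f.take l) (g2 - a' + 1) := by
      rw [hbpre _ hc1, hbpre _ hc2, e1, e2,
        bit_apply_of_mem hvk (by simp [TOp.positions]),
        bit_apply_of_mem hvk (by simp [TOp.positions])]
      exact bnot_ne (valid_S_iff.1 hvk).2
    refine case_S f l (g2 - a') hl1 hl2 hpre hsuf hc2 hbits ?_
    refine hb_of _ inferInstance (fun j hj => ?_) (fun j hP => by omega)
    constructor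
    · rintro (h | h)
      · exact absurd ⟨by omega, by omega⟩ (hco _ h)
      · simp only [TOp.positions, Finset.mem_insert, Finset.mem_singleton] at h
        omega
    · intro h
      right
      simp only [TOp.positions, Finset.mem_insert, Finset.mem_singleton]
      omega
  · -- one, none
    exfalso
    have e1 : q1 = g1 := by
      rcases hq1m' with h | h
      · exact hg1u q1 h hq1r
      · exact absurd hq1r (hck q1 h)
    have e2 : q2 = g1 := by
      rcases hq2m' with h | h
      · exact hg1u q2 h hq2r
      · exact absurd hq2r (hck q2 h)
    exact hq12 (e1.trans e2.symm)
  · -- one, one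
    have hgg : g1 ≠ g2 := fun h => Finset.disjoint_left.1 hd hg1m (h ▸ hg2m)
    by_cases hS1 : g2 - a' = g1 - a' + 1 ∧
        bit (f.take l) (g1 - a') ≠ bit (f.take l) (g2 - a')
    · refine case_S f l (g1 - a') hl1 hl2 hpre hsuf (by omega) (hS1.1 ▸ hS1.2) ?_
      refine hb_of _ inferInstance (fun j hj => ?_) (fun j hP => by omega)
      constructor
      · rintro (h | h)
        · have := hg1u _ h ⟨by omega, by omega⟩
          omega
        · have := hg2u _ h ⟨by omega, by omega⟩
          omega
      · rintro (h | h)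
        · left
          have : a' + j = g1 := by omega
          rw [this]; exact hg1m
        · right
          have : a' + j = g2 := by omega
          rw [this]; exact hg2m
    · by_cases hS2 : g1 - a' = g2 - a' + 1 ∧
          bit (f.take l) (g2 - a') ≠ bit (f.take l) (g1 - a')
      · refine case_S f l (g2 - a') hl1 hl2 hpre hsuf (by omega) (hS2.1 ▸ hS2.2) ?_
        refine hb_of _ inferInstance (fun j hj => ?_) (fun j hP => by omega)
        constructor
        · rintro (h | h)
          · have := hg1u _ h ⟨by omega, by omega⟩
            omega
          · have := hg2u _ h ⟨by omega, by omega⟩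
            omega
        · rintro (h | h)
          · right
            have : a' + j = g2 := by omega
            rw [this]; exact hg2m
          · left
            have : a' + j = g1 := by omega
            rw [this]; exact hg1m
      · refine case_RR f l (g1 - a') (g2 - a') hl1 hl2 hpre hsuf (by omega) (by omega)
          (by omega) (fun h => h.elim (fun h' => hS1 h') (fun h' => hS2 h')) ?_
        refine hb_of _ inferInstance (fun j hj => ?_) (fun j hP => by omega)
        constructor
        · rintro (h | h)
          · have := hg1u _ h ⟨by omega, by omega⟩
            omega
          · have := hg2u _ h ⟨by omega, by omega⟩
            omega
        · rintro (h | h)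
          · left
            have : a' + j = g1 := by omega
            rw [this]; exact hg1m
          · right
            have : a' + j = g2 := by omega
            rw [this]; exact hg2m
  · -- one, two
    subst hkS
    have hdis1 : g1 ∉ (TOp.S g2).positions := fun h => Finset.disjoint_left.1 hd hg1m h
    simp only [TOp.positions, Finset.mem_insert, Finset.mem_singleton, not_or] at hdis1
    have e1 : a' + (g2 - a') = g2 := by omega
    have e2 : a' + (g2 - a' + 1) = g2 + 1 := by omega
    have hbits : bit (f.take l) (g2 - a') ≠ bit (f.take l) (g2 - a' + 1) := by
      rw [hbpre _ (by omega), hbpre _ (by omega), e1, e2,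
        bit_apply_of_mem hvk (by simp [TOp.positions]),
        bit_apply_of_mem hvk (by simp [TOp.positions])]
      exact bnot_ne (valid_S_iff.1 hvk).2
    refine case_SR f l (g2 - a') (g1 - a') hl1 hl2 hpre hsuf (by omega) (by omega)
      ⟨by omega, by omega⟩ hbits ?_
    refine hb_of _ inferInstance (fun j hj => ?_) (fun j hP => by omega)
    constructor
    · rintro (h | h)
      · have := hg1u _ h ⟨by omega, by omega⟩
        omega
      · simp only [TOp.positions, Finset.mem_insert, Finset.mem_singleton] at h
        omega
    · rintro (h | h | h)
      · right
        simp only [TOp.positions, Finset.mem_insert, Finset.mem_singleton]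
        omega
      · right
        simp only [TOp.positions, Finset.mem_insert, Finset.mem_singleton]
        omega
      · left
        have : a' + j = g1 := by omega
        rw [this]; exact hg1m
  · -- two, none
    subst hoS
    have hd1 : g1 ∉ k.positions :=
      fun h => Finset.disjoint_left.1 hd (by simp [TOp.positions]) h
    have hd2 : g1 + 1 ∉ k.positions :=
      fun h => Finset.disjoint_left.1 hd (by simp [TOp.positions]) h
    have e1 : a' + (g1 - a') = g1 := by omega
    have e2 : a' + (g1 - a' + 1) = g1 + 1 := by omega
    have hbits : bit (f.take l) (g1 - a') ≠ bit (f.take l) (g1 - a' + 1) := by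
      rw [hbpre _ (by omega), hbpre _ (by omega), e1, e2,
        bit_apply_of_not_mem hd1 u, bit_apply_of_not_mem hd2 u]
      exact (valid_S_iff.1 hvo).2
    refine case_S f l (g1 - a') hl1 hl2 hpre hsuf (by omega) hbits ?_
    refine hb_of _ inferInstance (fun j hj => ?_) (fun j hP => by omega)
    constructor
    · rintro (h | h)
      · simp only [TOp.positions, Finset.mem_insert, Finset.mem_singleton] at h
        omega
      · exact absurd ⟨by omega, by omega⟩ (hck _ h)
    · intro h
      left
      simp only [TOp.positions, Finset.mem_insert, Finset.mem_singleton]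
      omega
  · -- two, one
    subst hoS
    have hd1 : g1 ∉ k.positions :=
      fun h => Finset.disjoint_left.1 hd (by simp [TOp.positions]) h
    have hd2 : g1 + 1 ∉ k.positions :=
      fun h => Finset.disjoint_left.1 hd (by simp [TOp.positions]) h
    have hdis1 : g2 ∉ (TOp.S g1).positions := fun h => Finset.disjoint_left.1 hd h hg2m
    simp only [TOp.positions, Finset.mem_insert, Finset.mem_singleton, not_or] at hdis1
    have e1 : a' + (g1 - a') = g1 := by omega
    have e2 : a' + (g1 - a' + 1) = g1 + 1 := by omega
    have hbits : bit (f.take l) (g1 - a') ≠ bit (f.take l) (g1 - a' + 1) := by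
      rw [hbpre _ (by omega), hbpre _ (by omega), e1, e2,
        bit_apply_of_not_mem hd1 u, bit_apply_of_not_mem hd2 u]
      exact (valid_S_iff.1 hvo).2
    refine case_SR f l (g1 - a') (g2 - a') hl1 hl2 hpre hsuf (by omega) (by omega)
      ⟨by omega, by omega⟩ hbits ?_
    refine hb_of _ inferInstance (fun j hj => ?_) (fun j hP => by omega)
    constructor
    · rintro (h | h)
      · simp only [TOp.positions, Finset.mem_insert, Finset.mem_singleton] at h
        omega
      · have := hg2u _ h ⟨by omega, by omega⟩
        omega
    · rintro (h | h | h)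
      · left
        simp only [TOp.positions, Finset.mem_insert, Finset.mem_singleton]
        omega
      · left
        simp only [TOp.positions, Finset.mem_insert, Finset.mem_singleton]
        omega
      · right
        have : a' + j = g2 := by omega
        rw [this]; exact hg2m
  · -- two, two
    subst hoS
    subst hkS
    have hd1 : g1 ∉ (TOp.S g2).positions :=
      fun h => Finset.disjoint_left.1 hd (by simp [TOp.positions]) h
    have hd2 : g1 + 1 ∉ (TOp.S g2).positions :=
      fun h => Finset.disjoint_left.1 hd (by simp [TOp.positions]) h
    simp only [TOp.positions, Finset.mem_insert, Finset.mem_singleton, not_or] at hd1 hd2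
    have e1 : a' + (g1 - a') = g1 := by omega
    have e2 : a' + (g1 - a' + 1) = g1 + 1 := by omega
    have e3 : a' + (g2 - a') = g2 := by omega
    have e4 : a' + (g2 - a' + 1) = g2 + 1 := by omega
    have hbc : bit (f.take l) (g1 - a') ≠ bit (f.take l) (g1 - a' + 1) := by
      rw [hbpre _ (by omega), hbpre _ (by omega), e1, e2,
        bit_apply_of_not_mem (by simp only [TOp.positions, Finset.mem_insert,
          Finset.mem_singleton]; omega) u,
        bit_apply_of_not_mem (by simp only [TOp.positions, Finset.mem_insert,
          Finset.mem_singleton]; omega) u]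
      exact (valid_S_iff.1 hvo).2
    have hbe : bit (f.take l) (g2 - a') ≠ bit (f.take l) (g2 - a' + 1) := by
      rw [hbpre _ (by omega), hbpre _ (by omega), e3, e4,
        bit_apply_of_mem hvk (by simp [TOp.positions]),
        bit_apply_of_mem hvk (by simp [TOp.positions])]
      exact bnot_ne (valid_S_iff.1 hvk).2
    refine case_SS f l (g1 - a') (g2 - a') hl1 hl2 hpre hsuf (by omega) (by omega)
      ⟨by omega, by omega, by omega⟩ hbc hbe ?_
    refine hb_of _ inferInstance (fun j hj => ?_) (fun j hP => by omega)
    constructor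
    · rintro (h | h)
      · simp only [TOp.positions, Finset.mem_insert, Finset.mem_singleton] at h
        omega
      · simp only [TOp.positions, Finset.mem_insert, Finset.mem_singleton] at h
        omega
    · rintro (h | h | h | h) <;>
      simp only [TOp.positions, Finset.mem_insert, Finset.mem_singleton] <;> omega

/-! ### Part VIII : the ascent argument -/

lemma ascent_core (n : ℕ) (L : List TOp) (A : TOp → ℕ) (hL : L ≠ [])
    (hdisj : ∀ o ∈ L, ∀ k ∈ L, o ≠ k → Disjoint o.positions k.positions)
    (hdist : ∀ o ∈ L, ∀ k ∈ L, o ≠ k → A o ≠ A k)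
    (hown : ∀ o ∈ L, A o ≤ o.hi ∧ o.lo < A o + n)
    (hext : ∀ o ∈ L, ∃ k ∈ L, k ≠ o ∧ A o ≤ k.hi ∧ k.lo < A o + n)
    (hpair : ∀ o ∈ L, ∀ k ∈ L, o ≠ k → A o < A k → ∀ q1 q2 : ℕ, q1 ≠ q2 →
      (A k ≤ q1 ∧ q1 < A o + n) → (A k ≤ q2 ∧ q2 < A o + n) →
      (q1 ∈ o.positions ∨ q1 ∈ k.positions) → (q2 ∈ o.positions ∨ q2 ∈ k.positions) →
      False) :
    False := by
  classical
  -- disjointness of the cell intervals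
  have hdisj' : ∀ o ∈ L, ∀ k ∈ L, o ≠ k → o.hi < k.lo ∨ k.hi < o.lo := by
    intro o ho k hk hne
    by_contra hcon
    push_neg at hcon
    have h1 := o.lo_le_hi
    have h2 := k.lo_le_hi
    have hmem1 : max o.lo k.lo ∈ o.positions := TOp.mem_positions.2 ⟨by omega, by omega⟩
    have hmem2 : max o.lo k.lo ∈ k.positions := TOp.mem_positions.2 ⟨by omega, by omega⟩
    exact Finset.disjoint_left.1 (hdisj o ho k hk hne) hmem1 hmem2
  -- the pinning lemma
  have lemC : ∀ y ∈ L, ∀ M ∈ L, y ≠ M → A y < A M → A y ≤ M.hi → M.lo < A y + n →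
      y.hi < A M := by
    intro y hy M hM hne hlt hhit1 hhit2
    by_contra hcon
    push_neg at hcon
    obtain ⟨hyo1, hyo2⟩ := hown y hy
    obtain ⟨hMo1, hMo2⟩ := hown M hM
    have hys := y.hi_le_lo_add_one
    have hyl := y.lo_le_hi
    have hMs := M.hi_le_lo_add_one
    have hMl := M.lo_le_hi
    have hint := hdisj' y hy M hM hne
    have haMn : A M ≤ A y + n := by omega
    by_cases hedge : A M = A y + n
    · omega
    · have hq1 : ∃ q1, y.lo ≤ q1 ∧ q1 ≤ y.hi ∧ A M ≤ q1 ∧ q1 < A y + n := by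
        by_cases h : y.hi < A y + n
        · exact ⟨y.hi, hyl, le_rfl, hcon, h⟩
        · exact ⟨y.lo, le_rfl, hyl, by omega, by omega⟩
      have hq2 : ∃ q2, M.lo ≤ q2 ∧ q2 ≤ M.hi ∧ A M ≤ q2 ∧ q2 < A y + n := by
        by_cases h : M.hi < A y + n
        · exact ⟨M.hi, hMl, le_rfl, hMo1, h⟩
        · exact ⟨M.lo, le_rfl, hMl, by omega, by omega⟩
      obtain ⟨q1, ha1, hb1, hc1, he1⟩ := hq1
      obtain ⟨q2, ha2, hb2, hc2, he2⟩ := hq2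
      exact hpair y hy M hM hne hlt q1 q2 (by omega) ⟨hc1, he1⟩ ⟨hc2, he2⟩
        (Or.inl (TOp.mem_positions.2 ⟨ha1, hb1⟩)) (Or.inr (TOp.mem_positions.2 ⟨ha2, hb2⟩))
  -- the invariant and the step
  have step : ∀ m ∈ L, (∀ y ∈ L, y ≠ m → A y < A m → y.hi < A m) →
      ∃ M ∈ L, A m < A M ∧ (∀ y ∈ L, y ≠ M → A y < A M → y.hi < A M) := by
    intro m hm hInv
    obtain ⟨k, hk, hkne, hkh1, hkh2⟩ := hext m hm
    have hAk : A m < A k := by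
      rcases lt_trichotomy (A m) (A k) with h | h | h
      · exact h
      · exact absurd h.symm (hdist k hk m hm hkne)
      · exact absurd (hInv k hk hkne h) (by omega)
    refine ⟨k, hk, hAk, ?_⟩
    intro y hy hyne hylt
    rcases lt_trichotomy (A y) (A m) with h | h | h
    · exact lt_trans (hInv y hy (fun he => absurd (he ▸ h) (lt_irrefl _)) h) hAk
    · have hym : y = m := by
        by_contra hne2
        exact hdist y hy m hm hne2 h
      subst hym
      exact lemC y hy k hk hyne hylt (h ▸ hkh1) (by omega)
    · exact lemC y hy k hk hyne hylt (le_trans (le_of_lt hylt) (hown k hk).1) (by omega)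
  -- induction on the number of ops with larger window
  have main : ∀ (N : ℕ) (m : TOp), m ∈ L → (∀ y ∈ L, y ≠ m → A y < A m → y.hi < A m) →
      (L.toFinset.filter (fun k => A m < A k)).card ≤ N → False := by
    intro N
    induction N with
    | zero =>
      intro m hm hInv hcard
      obtain ⟨M, hM, hAM, _⟩ := step m hm hInv
      have hmem : M ∈ L.toFinset.filter (fun k => A m < A k) :=
        Finset.mem_filter.2 ⟨List.mem_toFinset.2 hM, hAM⟩
      have := Finset.card_pos.2 ⟨M, hmem⟩
      omega
    | succ N ih =>
      intro m hm hInv hcard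
      obtain ⟨M, hM, hAM, hInvM⟩ := step m hm hInv
      apply ih M hM hInvM
      have hss : L.toFinset.filter (fun k => A M < A k) ⊂
          L.toFinset.filter (fun k => A m < A k) := by
        rw [Finset.ssubset_iff_of_subset]
        · exact ⟨M, Finset.mem_filter.2 ⟨List.mem_toFinset.2 hM, hAM⟩,
            fun hc => absurd (Finset.mem_filter.1 hc).2 (lt_irrefl _)⟩
        · intro x hx
          rw [Finset.mem_filter] at hx ⊢
          exact ⟨hx.1, lt_trans hAM hx.2⟩
      have := Finset.card_lt_card hss
      omega
  -- start from the minimal window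
  obtain ⟨m0, hm0, hmin⟩ : ∃ m ∈ L, ∀ k ∈ L, A m ≤ A k := by
    have hne : L.toFinset.Nonempty := by
      obtain ⟨x, hx⟩ := List.exists_mem_of_ne_nil L hL
      exact ⟨x, List.mem_toFinset.2 hx⟩
    obtain ⟨m, hm, hminf⟩ := Finset.exists_min_image L.toFinset A hne
    exact ⟨m, List.mem_toFinset.1 hm, fun k hk => hminf k (List.mem_toFinset.2 hk)⟩
  exact main _ m0 hm0 (fun y hy hne hlt => absurd (hmin y hy) (by omega)) le_rfl


/-! ### Part IX : main theorem -/

theorem stmt8 (f : List Bool) (h : ¬ TildeIsometric f) :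
    (∃ l i, 1 ≤ l ∧ l ≤ f.length - 1 ∧
        (TOp.S i).valid (f.take l) ∧ (TOp.S i).apply (f.take l) = f.drop (f.length - l)) ∨
    (∃ l, 1 ≤ l ∧ l ≤ f.length - 1 ∧ tdist (f.take l) (f.drop (f.length - l)) = 2) := by
  classical
  show Concl f
  by_contra hcon
  rw [TildeIsometric] at h
  push_neg at h
  obtain ⟨u0, v0, hlen0, hflen0, hfu0, hfv0, hbad0⟩ := h
  -- bad pairs
  have hset : {d | ∃ u v : List Bool, (u.length = v.length ∧ f.length < u.length ∧
      FFree f u ∧ FFree f v ∧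
      ∀ ops : List TOp, MinimalTransf ops u v → ¬ FreeTransf f ops u) ∧
      tdist u v = d}.Nonempty :=
    ⟨tdist u0 v0, u0, v0, ⟨hlen0, hflen0, hfu0, hfv0, hbad0⟩, rfl⟩
  obtain ⟨u, v, ⟨hlen, hflen, hfu, hfv, hbad⟩, hdmin⟩ := Nat.sInf_mem hset
  have hminimal : ∀ u' v' : List Bool, (u'.length = v'.length ∧ f.length < u'.length ∧
      FFree f u' ∧ FFree f v' ∧
      ∀ ops : List TOp, MinimalTransf ops u' v' → ¬ FreeTransf f ops u') →
      tdist u v ≤ tdist u' v' := by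
    intro u' v' hb
    rw [hdmin]
    exact Nat.sInf_le ⟨u', v', hb, rfl⟩
  set n := f.length with hn
  have hn1 : 1 ≤ n := by
    by_contra hc
    push_neg at hc
    have hfnil : f = [] := List.length_eq_zero_iff.1 (by omega)
    rw [hfnil] at hfu
    exact hfu List.nil_infix
  -- tdist u v ≥ 1
  have hd1 : 1 ≤ tdist u v := by
    by_contra hc
    push_neg at hc
    have h0 : tdist u v = 0 := by omega
    have huv : u = v := eq_of_tdist_zero hlen h0
    have hmt : MinimalTransf [] u v := ⟨⟨trivial, huv⟩, by simp [h0], List.Pairwise.nil⟩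
    have hft : FreeTransf f [] u := by
      intro w hw
      simp only [trajectory, List.scanl_nil, List.mem_singleton] at hw
      subst hw
      exact hfu
    exact hbad [] hmt hft
  -- minimal eachPosOnce transformation
  obtain ⟨ops, htr, hepo, hlops⟩ := exists_minimal_transf hlen
  have hopsne : ops ≠ [] := by
    intro hnil
    rw [hnil] at hlops
    simp at hlops
    omega
  have hfront : ∀ o ∈ ops, o.valid u ∧ validSeq (ops.erase o) (o.apply u) ∧
      applySeq (ops.erase o) (o.apply u) = v := by
    intro o ho
    obtain ⟨h1, h2, h3⟩ := front_of_mem hepo htr.1 ho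
    exact ⟨h1, h2, by rw [h3, htr.2]⟩
  have hpairwise : ∀ o ∈ ops, ∀ k ∈ ops, o ≠ k → Disjoint o.positions k.positions := by
    have hsymm : Symmetric (fun o o' : TOp => Disjoint o.positions o'.positions) :=
      fun _ _ hd => hd.symm
    intro o ho k hk hne
    letI : Std.Symm (fun o o' : TOp => Disjoint o.positions o'.positions) := ⟨fun _ _ hd => hsymm hd⟩
    exact List.Pairwise.forall hepo ho hk hne
  -- K1 : applying any single operation creates an occurrence of f
  have hK1 : ∀ o ∈ ops, ¬ FFree f (o.apply u) := by
    intro o ho hfree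
    obtain ⟨hvo, hversed, happ⟩ := hfront o ho
    have hlen' : (o.apply u).length = v.length := by rw [length_apply]; exact hlen
    have htre : Transforms (ops.erase o) (o.apply u) v := ⟨hversed, happ⟩
    have hlerase : (ops.erase o).length = ops.length - 1 := List.length_erase_of_mem ho
    have hup : tdist (o.apply u) v ≤ tdist u v - 1 := by
      have h1 := tdist_le htre
      rw [hlerase, hlops] at h1
      omega
    have hlow : tdist u v ≤ tdist (o.apply u) v + 1 := tdist_le_succ_of_valid hvo hlen
    have heq2 : tdist (o.apply u) v = tdist u v - 1 := by omega
    have hflen' : f.length < (o.apply u).length := by rw [length_apply]; exact hflen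
    have hex : ∃ ops₁ : List TOp, MinimalTransf ops₁ (o.apply u) v ∧
        FreeTransf f ops₁ (o.apply u) := by
      by_contra hc
      push_neg at hc
      have hb : (o.apply u).length = v.length ∧ f.length < (o.apply u).length ∧
          FFree f (o.apply u) ∧ FFree f v ∧
          ∀ ops₁ : List TOp, MinimalTransf ops₁ (o.apply u) v →
            ¬ FreeTransf f ops₁ (o.apply u) := ⟨hlen', hflen', hfree, hfv, hc⟩
      have := hminimal _ _ hb
      omega
    obtain ⟨ops₁, ⟨htr₁, hlen₁, hepo₁⟩, hft₁⟩ := hex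
    have hdisj₁ : ∀ o₁ ∈ ops₁, Disjoint o.positions o₁.positions := by
      intro o₁ ho₁
      rw [Finset.disjoint_left]
      intro p hpo hpo₁
      have hmis : bit u p ≠ bit v p := (mismatch_iff_touched htr hepo p).2 ⟨o, ho, hpo⟩
      have hmis₁ : bit (o.apply u) p ≠ bit v p :=
        (mismatch_iff_touched htr₁ hepo₁ p).2 ⟨o₁, ho₁, hpo₁⟩
      rw [bit_apply_of_mem hvo hpo] at hmis₁
      cases hbu : bit u p <;> cases hbv : bit v p <;> simp_all
    have hmtfull : MinimalTransf (o :: ops₁) u v := by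
      refine ⟨⟨⟨hvo, htr₁.1⟩, htr₁.2⟩, ?_, ?_⟩
      · simp only [List.length_cons, hlen₁, heq2]
        omega
      · rw [eachPosOnce_cons]
        exact ⟨fun o' ho' => hdisj₁ o' ho', hepo₁⟩
    have hftfull : FreeTransf f (o :: ops₁) u := by
      intro w hw
      rw [trajectory_cons] at hw
      rcases List.mem_cons.1 hw with rfl | hw'
      · exact hfu
      · exact hft₁ w hw'
    exact hbad _ hmtfull hftfull
  -- occurrence windows
  have hocc : ∀ o ∈ ops, ∃ a, a + n ≤ u.length ∧
      ∀ j < n, bit (o.apply u) (a + j) = bit f j := by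
    intro o ho
    have h1 := hK1 o ho
    rw [FFree, not_not, infix_iff_window] at h1
    obtain ⟨a, ha1, ha2⟩ := h1
    rw [length_apply] at ha1
    exact ⟨a, ha1, ha2⟩
  choose! A hA1 hA2 using hocc
  -- own hit
  have hown : ∀ o ∈ ops, ∃ p ∈ o.positions, A o ≤ p ∧ p < A o + n := by
    intro o ho
    by_contra hc
    push_neg at hc
    apply hfu
    rw [infix_iff_window]
    refine ⟨A o, hA1 o ho, fun j hj => ?_⟩
    rw [← hA2 o ho j hj]
    exact (bit_apply_of_not_mem
      (fun hm => absurd (hc (A o + j) hm (by omega)) (by omega)) u).symm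
  -- windows distinct
  have hdistinct : ∀ o ∈ ops, ∀ k ∈ ops, o ≠ k → A o ≠ A k := by
    intro o ho k hk hne heqA
    obtain ⟨p, hp, hp1, hp2⟩ := hown o ho
    have hj : p - A o < n := by omega
    have e1 : A o + (p - A o) = p := by omega
    have h1 : bit (o.apply u) p = bit f (p - A o) := by
      have := hA2 o ho (p - A o) hj
      rw [e1] at this
      exact this
    have h2 : bit (k.apply u) p = bit f (p - A o) := by
      have := hA2 k hk (p - A o) hj
      rw [← heqA, e1] at this
      exact this
    have h3 : bit (o.apply u) p = !(bit u p) := bit_apply_of_mem (hfront o ho).1 hp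
    have h4 : bit (k.apply u) p = bit u p :=
      bit_apply_of_not_mem (fun hm => Finset.disjoint_left.1 (hpairwise o ho k hk hne) hp hm) u
    rw [h3] at h1
    rw [h4] at h2
    rw [← h2] at h1
    exact Bool.not_ne_self (bit u p) h1
  -- external hit (from v being f-free)
  have hext : ∀ o ∈ ops, ∃ k ∈ ops, k ≠ o ∧ ∃ p ∈ k.positions, A o ≤ p ∧ p < A o + n := by
    intro o ho
    by_contra hc
    push_neg at hc
    apply hfv
    rw [infix_iff_window]
    refine ⟨A o, by rw [← hlen]; exact hA1 o ho, fun j hj => ?_⟩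
    have hveq : bit v (A o + j) = bit (o.apply u) (A o + j) := by
      by_cases hq : A o + j ∈ o.positions
      · rw [← htr.2, bit_applySeq_of_touched hepo htr.1 ho hq,
          bit_apply_of_mem (hfront o ho).1 hq]
      · rw [← htr.2, bit_applySeq_of_not_touched ?_ u, bit_apply_of_not_mem hq u]
        intro z hz hmem
        by_cases hzo : z = o
        · exact hq (hzo ▸ hmem)
        · exact absurd (hc z hz hzo (A o + j) hmem (by omega)) (by omega)
    rw [hveq]
    exact hA2 o ho j hj
  -- apply the ascent argument
  apply ascent_core n ops A hopsne hpairwise hdistinct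
  · intro o ho
    obtain ⟨p, hp, hp1, hp2⟩ := hown o ho
    rw [TOp.mem_positions] at hp
    exact ⟨by omega, by omega⟩
  · intro o ho
    obtain ⟨k, hk, hkne, p, hp, hp1, hp2⟩ := hext o ho
    rw [TOp.mem_positions] at hp
    exact ⟨k, hk, hkne, by omega, by omega⟩
  · intro o ho k hk hne hlt q1 q2 hq12 hq1r hq2r hq1m hq2m
    apply hcon
    exact escape f u o k (hfront o ho).1 (hfront k hk).1 (hpairwise o ho k hk hne)
      (A o) (A k) hlt (hA2 o ho) (hA2 k hk) q1 q2 hq12 hq1r hq2r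
      (Finset.mem_union.2 hq1m) (Finset.mem_union.2 hq2m)
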